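/- arXiv:0909.1184 — 2 statements merged into one kernel-verified Lean document; each statement's English description precedes it below -/
import Mathlib

section
/- Let L be a positive definite even lattice in (V,Q) and let p be a prime such that L is maximal at p. Let L^{♯,p} := L^# ∩ ℤ[1/p]·L be the lattice dualized only at p. Then {x ∈ L^{♯,p} : Q(x) ∈ ℤ} = L; in particular, for every n ∈ ℤ the finite sets {x ∈ L^{♯,p} : Q(x) = n} and {x ∈ L : Q(x) = n} coincide, i.e. θ(L^{♯,p})∣U⁰(p) = θ(L). -/
noncomputable section

open Complex UpperHalfPlane Matrix Finset Filter CongruenceSubgroup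
open scoped MatrixGroups ModularForm Real

namespace BN

/-! ### Lattices in rational quadratic spaces -/

variable {V : Type} [AddCommGroup V] [Module ℚ V]

/-- The bilinear form `(x,y) := Q(x+y) - Q(x) - Q(y)` associated to `Q`. -/
def bf (Q : QuadraticForm ℚ V) (x y : V) : ℚ := Q (x + y) - Q x - Q y

/-- `L` is a (full) `ℤ`-lattice in `V`: finitely generated and spanning `V` over `ℚ`. -/
def IsZLattice (L : Submodule ℤ V) : Prop :=
  L.FG ∧ Submodule.span ℚ (L : Set V) = ⊤

/-- `L` is an even lattice : `Q` takes integral values on `L`. -/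
def IsEvenL (Q : QuadraticForm ℚ V) (L : Submodule ℤ V) : Prop :=
  ∀ x ∈ L, ∃ n : ℤ, Q x = (n : ℚ)

/-- The dual lattice of `L` (taken inside the rational span of `L`). -/
def dualSet (Q : QuadraticForm ℚ V) (L : Submodule ℤ V) : Set V :=
  {x | x ∈ Submodule.span ℚ (L : Set V) ∧ ∀ ℓ ∈ L, ∃ n : ℤ, bf Q x ℓ = (n : ℚ)}

/-- `L` has rank `n` and the determinant of a Gram matrix of a `ℤ`-basis is `d`. -/
def HasGram (Q : QuadraticForm ℚ V) (L : Submodule ℤ V) (n : ℕ) (d : ℚ) : Prop :=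
  ∃ b : Module.Basis (Fin n) ℤ L, (Matrix.of fun i j => bf Q (b i : V) (b j : V)).det = d

/-- The even lattice `L` has exact level `N`: `N` is the smallest positive integer
such that `N·Q` is integral on the dual lattice. -/
def HasLevel (Q : QuadraticForm ℚ V) (L : Submodule ℤ V) (N : ℕ) : Prop :=
  0 < N ∧ (∀ x ∈ dualSet Q L, ∃ z : ℤ, (N : ℚ) * Q x = (z : ℚ)) ∧
    ∀ M : ℕ, 0 < M → (∀ x ∈ dualSet Q L, ∃ z : ℤ, (M : ℚ) * Q x = (z : ℚ)) → N ≤ M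

/-- `L` is a maximal even lattice: even, and admitting no proper even overlattice
 (inside the rational span of `L`). -/
def IsMaximalEvenL (Q : QuadraticForm ℚ V) (L : Submodule ℤ V) : Prop :=
  IsEvenL Q L ∧ ∀ L' : Submodule ℤ V, L'.FG → IsEvenL Q L' →
    (L' : Set V) ⊆ (Submodule.span ℚ (L : Set V) : Set V) → L ≤ L' → L' = L

/-- `L` is maximal at the prime `p`: even, and admitting no even overlattice `L'` with
`L'/L` a (finite) `p`-group. -/
def IsMaximalAtL (Q : QuadraticForm ℚ V) (L : Submodule ℤ V) (p : ℕ) : Prop :=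
  IsEvenL Q L ∧ ∀ L' : Submodule ℤ V, L'.FG → IsEvenL Q L' → L ≤ L' →
    (∀ x ∈ L', ∃ r : ℕ, ((p : ℤ) ^ r) • x ∈ L) → L' = L

/-- The theta series of the even lattice `L`. -/
def theta (Q : QuadraticForm ℚ V) (L : Submodule ℤ V) : ℍ → ℂ :=
  fun τ => ∑' x : L, Complex.exp (2 * Real.pi * Complex.I * ((Q x : ℚ) : ℂ) * (τ : ℂ))

/-- The theta series of the adjoint lattice `√N L^#`. -/
def thetaAdj (Q : QuadraticForm ℚ V) (L : Submodule ℤ V) (N : ℕ) : ℍ → ℂ :=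
  fun τ => ∑' x : dualSet Q L,
    Complex.exp (2 * Real.pi * Complex.I * (N : ℂ) * ((Q (x : V) : ℚ) : ℂ) * (τ : ℂ))

/-- `w` is a characteristic vector of `M` : `(w,x) ≡ (x,x) mod 2` for all `x ∈ M`. -/
def IsCharVec (Q : QuadraticForm ℚ V) (M : Submodule ℤ V) (w : V) : Prop :=
  w ∈ M ∧ ∀ x ∈ M, ∃ n : ℤ, bf Q w x - bf Q x x = 2 * (n : ℚ)

/-- `M` is an integral lattice. -/
def IsIntegralL (Q : QuadraticForm ℚ V) (M : Submodule ℤ V) : Prop :=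
  ∀ x ∈ M, ∀ y ∈ M, ∃ n : ℤ, bf Q x y = (n : ℚ)

/-- `M` is a unimodular lattice: integral and equal to its dual. -/
def IsUnimodularL (Q : QuadraticForm ℚ V) (M : Submodule ℤ V) : Prop :=
  IsIntegralL Q M ∧ dualSet Q M = (M : Set V)

/-- `M` is an odd lattice: some vector has odd norm. -/
def IsOddL (Q : QuadraticForm ℚ V) (M : Submodule ℤ V) : Prop :=
  ∃ x ∈ M, ¬ ∃ n : ℤ, bf Q x x = 2 * (n : ℚ)

/-! ### Operators on functions on the upper half-plane -/

lemma moeb_im_pos (γ : Matrix (Fin 2) (Fin 2) ℝ) (h : 0 < γ.det) (τ : ℍ) :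
    0 < ((((γ 0 0 : ℝ) : ℂ) * (τ : ℂ) + ((γ 0 1 : ℝ) : ℂ)) /
        (((γ 1 0 : ℝ) : ℂ) * (τ : ℂ) + ((γ 1 1 : ℝ) : ℂ))).im := by
  set a := γ 0 0
  set b := γ 0 1
  set c := γ 1 0
  set d := γ 1 1
  have hdet : 0 < a * d - b * c := by
    have := Matrix.det_fin_two γ
    rw [this] at h
    exact h
  have him : 0 < (τ : ℂ).im := τ.2
  have hw : ((c : ℂ) * (τ : ℂ) + (d : ℂ)) ≠ 0 := by
    intro h0
    have h2 : ((c : ℂ) * (τ : ℂ) + (d : ℂ)).re = 0 := by rw [h0]; simp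
    have h1 : ((c : ℂ) * (τ : ℂ) + (d : ℂ)).im = 0 := by rw [h0]; simp
    simp [Complex.add_im, Complex.mul_im] at h1
    rcases h1 with hc | htau
    · have hd0 : d = 0 := by
        have hre : ((c : ℂ) * (τ : ℂ) + (d : ℂ)).re = c * (τ : ℂ).re + d := by
          simp [Complex.add_re, Complex.mul_re]
        rw [hre, hc] at h2
        linarith
      rw [hc, hd0] at hdet
      nlinarith
    · have htau' : (τ : ℂ).im = 0 := by simpa [UpperHalfPlane.coe_im] using htau
      linarith
  have hns : 0 < Complex.normSq ((c : ℂ) * (τ : ℂ) + (d : ℂ)) := Complex.normSq_pos.mpr hw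
  rw [Complex.div_im]
  have h1 : (((a : ℂ)) * (τ : ℂ) + (b : ℂ)).im = a * (τ : ℂ).im := by
    simp [Complex.add_im, Complex.mul_im]
  have h2 : (((a : ℂ)) * (τ : ℂ) + (b : ℂ)).re = a * (τ : ℂ).re + b := by
    simp [Complex.add_re, Complex.mul_re]
  have h3 : (((c : ℂ)) * (τ : ℂ) + (d : ℂ)).im = c * (τ : ℂ).im := by
    simp [Complex.add_im, Complex.mul_im]
  have h4 : (((c : ℂ)) * (τ : ℂ) + (d : ℂ)).re = c * (τ : ℂ).re + d := by
    simp [Complex.add_re, Complex.mul_re]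
  rw [h1, h2, h3, h4, div_sub_div_same, lt_div_iff₀ hns]
  nlinarith

/-- The Petersson slash operator `f ∣_k γ`, normalized (as in the paper) by
`(f∣_k γ)(τ) = det(γ)^{k/2} (cτ+d)^{-k} f(γτ)` (defined to be `0` if `det γ ≤ 0`). -/
def pslash (k : ℤ) (γ : Matrix (Fin 2) (Fin 2) ℝ) (f : ℍ → ℂ) : ℍ → ℂ :=
  fun τ =>
    if h : 0 < γ.det then
      ((γ.det ^ ((k : ℝ) / 2) : ℝ) : ℂ) *
        (((γ 1 0 : ℝ) : ℂ) * (τ : ℂ) + ((γ 1 1 : ℝ) : ℂ)) ^ (-k) *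
        f ⟨_, moeb_im_pos γ h τ⟩
    else 0

/-- The operator `U⁰(p)`: `(g∣U⁰(p))(τ) = (1/p)·Σ_{j<p} g(τ+j)`. -/
def U0op (p : ℕ) (g : ℍ → ℂ) : ℍ → ℂ :=
  fun τ => (p : ℂ)⁻¹ * ∑ j ∈ Finset.range p,
    g ⟨(τ : ℂ) + (j : ℕ), by simpa using τ.2⟩

/-- The operator `U(p)`: `(f∣U(p))(τ) = (1/p)·Σ_{j<p} f((τ+j)/p)`. -/
def Uop (p : ℕ) (f : ℍ → ℂ) : ℍ → ℂ :=
  fun τ =>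
    if hp : 0 < p then
      (p : ℂ)⁻¹ * ∑ j ∈ Finset.range p,
        f ⟨((τ : ℂ) + (j : ℕ)) / (p : ℕ), by
          rw [Complex.div_natCast_im]
          have him : (((τ : ℂ) + (j : ℕ)).im) = (τ : ℂ).im := by simp
          rw [him]
          exact div_pos τ.2 (by exact_mod_cast hp)⟩
    else 0

/-- The real matrix attached to an integral matrix `ω ∈ SL₂(ℤ)`. -/
def matR (ω : Matrix.SpecialLinearGroup (Fin 2) ℤ) : Matrix (Fin 2) (Fin 2) ℝ :=
  ((ω : Matrix (Fin 2) (Fin 2) ℤ)).map (Int.cast : ℤ → ℝ)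

/-- The Atkin-Lehner matrix `W_p^N = ω_p^N · [[p,0],[0,1]]`. -/
def Wmat (ω : Matrix.SpecialLinearGroup (Fin 2) ℤ) (p : ℕ) : Matrix (Fin 2) (Fin 2) ℝ :=
  matR ω * !![(p : ℝ), 0; 0, 1]

/-- The standard Fricke/Atkin-Lehner matrix `[[0,-1],[p,0]]` for prime level `p`. -/
def WmatP (p : ℕ) : Matrix (Fin 2) (Fin 2) ℝ := !![0, -1; (p : ℝ), 0]

/-- `ω ≡ [[0,-1],[1,0]] mod p` and `ω ≡ 1₂ mod q`. -/
def CongrCond (ω : Matrix.SpecialLinearGroup (Fin 2) ℤ) (p q : ℕ) : Prop :=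
  (ω 0 0) ≡ 0 [ZMOD (p : ℤ)] ∧ (ω 0 1) ≡ -1 [ZMOD (p : ℤ)] ∧
  (ω 1 0) ≡ 1 [ZMOD (p : ℤ)] ∧ (ω 1 1) ≡ 0 [ZMOD (p : ℤ)] ∧
  (ω 0 0) ≡ 1 [ZMOD (q : ℤ)] ∧ (ω 0 1) ≡ 0 [ZMOD (q : ℤ)] ∧
  (ω 1 0) ≡ 0 [ZMOD (q : ℤ)] ∧ (ω 1 1) ≡ 1 [ZMOD (q : ℤ)]

/-- The constant `p^{1 - k/2}` (as a complex number). -/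
def Ck (p : ℕ) (k : ℤ) : ℂ := (((p : ℝ) ^ ((1 : ℝ) - (k : ℝ) / 2) : ℝ) : ℂ)

/-- Membership in `M_k(N)^*`: `f∣W_p^N + p^{1-k/2} f∣U(p) = 0` for all primes `p ∣ N`
(for every admissible choice of `ω_p^N`). -/
def MemMstar (N : ℕ) (k : ℤ) (f : ℍ → ℂ) : Prop :=
  ∀ p : ℕ, p.Prime → p ∣ N → ∀ ω : Matrix.SpecialLinearGroup (Fin 2) ℤ,
    CongrCond ω p (N / p) →
      ∀ τ, pslash k (Wmat ω p) f τ + Ck p k * Uop p f τ = 0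

/-- Membership in `M_k(N)_*`: `f + p^{1-k/2} (f∣W_p^N)∣U(p) = 0` for all primes `p ∣ N`. -/
def MemMlow (N : ℕ) (k : ℤ) (f : ℍ → ℂ) : Prop :=
  ∀ p : ℕ, p.Prime → p ∣ N → ∀ ω : Matrix.SpecialLinearGroup (Fin 2) ℤ,
    CongrCond ω p (N / p) →
      ∀ τ, f τ + Ck p k * Uop p (pslash k (Wmat ω p) f) τ = 0

/-- Membership in `M_k(p)^*` for a prime level `p`, with `W = [[0,-1],[p,0]]`. -/
def MemMstarP (p : ℕ) (k : ℤ) (f : ℍ → ℂ) : Prop :=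
  ∀ τ, pslash k (WmatP p) f τ + Ck p k * Uop p f τ = 0

/-- Membership in `M_k(p)_*` for a prime level `p`, with `W = [[0,-1],[p,0]]`. -/
def MemMlowP (p : ℕ) (k : ℤ) (f : ℍ → ℂ) : Prop :=
  ∀ τ, f τ + Ck p k * Uop p (pslash k (WmatP p) f) τ = 0

lemma pslash_add (k : ℤ) (γ : Matrix (Fin 2) (Fin 2) ℝ) (f g : ℍ → ℂ) :
    pslash k γ (f + g) = pslash k γ f + pslash k γ g := by
  funext τ
  simp only [pslash, Pi.add_apply]
  split
  · ring
  · simp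

lemma pslash_smul (k : ℤ) (γ : Matrix (Fin 2) (Fin 2) ℝ) (c : ℂ) (f : ℍ → ℂ) :
    pslash k γ (c • f) = c • pslash k γ f := by
  funext τ
  simp only [pslash, Pi.smul_apply, smul_eq_mul]
  split
  · ring
  · simp

lemma pslash_zero (k : ℤ) (γ : Matrix (Fin 2) (Fin 2) ℝ) :
    pslash k γ (0 : ℍ → ℂ) = 0 := by
  funext τ
  simp only [pslash, Pi.zero_apply]
  split <;> simp

lemma Uop_add (p : ℕ) (f g : ℍ → ℂ) : Uop p (f + g) = Uop p f + Uop p g := by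
  funext τ
  simp only [Uop, Pi.add_apply]
  split
  · rw [Finset.sum_add_distrib]; ring
  · simp

lemma Uop_smul (p : ℕ) (c : ℂ) (f : ℍ → ℂ) : Uop p (c • f) = c • Uop p f := by
  funext τ
  simp only [Uop, Pi.smul_apply, smul_eq_mul]
  split
  · rw [← Finset.mul_sum]; ring
  · simp

lemma Uop_zero (p : ℕ) : Uop p (0 : ℍ → ℂ) = 0 := by
  funext τ
  simp only [Uop, Pi.zero_apply]
  split <;> simp

/-- The space `M_k(p)^*` (for a prime level `p`) as a subspace of the space of
modular forms of weight `k` for `Γ₀(p)`. -/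
def MstarSubP (p : ℕ) (k : ℤ) : Submodule ℂ (ModularForm (Gamma0 p) k) where
  carrier := {f | MemMstarP p k ⇑f}
  add_mem' := by
    intro f g hf hg
    intro τ
    rw [ModularForm.coe_add, pslash_add, Uop_add]
    have h1 := hf τ
    have h2 := hg τ
    simp only [Pi.add_apply]
    linear_combination h1 + h2
  zero_mem' := by
    intro τ
    rw [ModularForm.coe_zero, pslash_zero, Uop_zero]
    simp
  smul_mem' := by
    intro c f hf τ
    rw [ModularForm.coe_smul, pslash_smul, Uop_smul]
    simp only [Pi.smul_apply, smul_eq_mul]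
    linear_combination c * hf τ

/-- The space `M_k(N)^*` (for squarefree `N`) as a subspace of the space of
modular forms of weight `k` for `Γ₀(N)`. -/
def MstarSub (N : ℕ) (k : ℤ) : Submodule ℂ (ModularForm (Gamma0 N) k) where
  carrier := {f | MemMstar N k ⇑f}
  add_mem' := by
    intro f g hf hg
    intro p hp hpN ω hω τ
    rw [ModularForm.coe_add, pslash_add, Uop_add]
    have h1 := hf p hp hpN ω hω τ
    have h2 := hg p hp hpN ω hω τ
    simp only [Pi.add_apply]
    linear_combination h1 + h2
  zero_mem' := by
    intro p hp hpN ω hω τ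
    rw [ModularForm.coe_zero, pslash_zero, Uop_zero]
    simp
  smul_mem' := by
    intro c f hf p hp hpN ω hω τ
    rw [ModularForm.coe_smul, pslash_smul, Uop_smul]
    simp only [Pi.smul_apply, smul_eq_mul]
    linear_combination c * hf p hp hpN ω hω τ

/-- The subspace of cusp forms inside the space of modular forms. -/
def SSub (N : ℕ) (k : ℤ) : Submodule ℂ (ModularForm (Gamma0 N) k) where
  carrier := {f | ∃ g : CuspForm (Gamma0 N) k, ⇑g = ⇑f}
  add_mem' := by
    rintro f g ⟨a, ha⟩ ⟨b, hb⟩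
    exact ⟨a + b, by rw [CuspForm.coe_add, ModularForm.coe_add, ha, hb]⟩
  zero_mem' := ⟨0, by rw [CuspForm.coe_zero, ModularForm.coe_zero]⟩
  smul_mem' := by
    rintro c f ⟨a, ha⟩
    exact ⟨c • a, by rw [CuspForm.coe_smul, ModularForm.coe_smul, ha]⟩

/-- A maximal even lattice of level `p`, determinant `p²` and rank `2k` is dual extremal if
`min(√p L^#) ≥ 2 dim M_k(p)^*`, i.e. its adjoint theta series is the extremal modular form. -/
def DualExtremalP (Q : QuadraticForm ℚ V) (p kk : ℕ) (L : Submodule ℤ V) : Prop :=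
  IsZLattice L ∧ IsMaximalEvenL Q L ∧ HasLevel Q L p ∧ HasGram Q L (2 * kk) ((p : ℚ) ^ 2) ∧
    ∀ x ∈ dualSet Q L, x ≠ 0 →
      (2 * (Module.finrank ℂ (MstarSubP p (kk : ℤ))) : ℚ) ≤ (p : ℚ) * bf Q x x

/-- `D` is a fundamental discriminant (the discriminant of a quadratic number field, or `1`). -/
def IsFundamentalDiscriminant (D : ℤ) : Prop :=
  (D % 4 = 1 ∧ Squarefree D) ∨
    (D % 4 = 0 ∧ Squarefree (D / 4) ∧ ((D / 4) % 4 = 2 ∨ (D / 4) % 4 = 3))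


/-- if `L` is maximal at `p`, the integral-norm vectors of the lattice
`L^{♯,p} = L^# ∩ ℤ[1/p]·L` dualized only at `p` are exactly the vectors of `L`;
in particular `θ(L^{♯,p})∣U⁰(p) = θ(L)` coefficientwise. -/
theorem maximal_at_p_dual_at_p
    {V : Type} [AddCommGroup V] [Module ℚ V] [FiniteDimensional ℚ V]
    (Q : QuadraticForm ℚ V) (hQ : Q.PosDef)
    (L : Submodule ℤ V) (hL : IsZLattice L)
    (p : ℕ) (hp : p.Prime) (hmax : IsMaximalAtL Q L p) :
    {x : V | x ∈ dualSet Q L ∧ (∃ r : ℕ, ((p : ℤ) ^ r) • x ∈ L) ∧ ∃ n : ℤ, Q x = (n : ℚ)}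
        = (L : Set V) ∧
      ∀ n : ℤ,
        {x : V | x ∈ dualSet Q L ∧ (∃ r : ℕ, ((p : ℤ) ^ r) • x ∈ L) ∧ Q x = (n : ℚ)}
          = {x : V | x ∈ L ∧ Q x = (n : ℚ)} := by
  have hLsub : (L : Set V) ⊆ {x : V | x ∈ dualSet Q L ∧ (∃ r : ℕ, ((p : ℤ) ^ r) • x ∈ L) ∧
      ∃ n : ℤ, Q x = (n : ℚ)} := by
    intro x hx
    refine ⟨⟨Submodule.subset_span hx, ?_⟩, ⟨0, by simpa using hx⟩, hmax.1 x hx⟩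
    intro ℓ hℓ
    obtain ⟨a, ha⟩ := hmax.1 (x + ℓ) (L.add_mem hx hℓ)
    obtain ⟨b, hb⟩ := hmax.1 x hx
    obtain ⟨c, hc⟩ := hmax.1 ℓ hℓ
    exact ⟨a - b - c, by simp [bf, ha, hb, hc]⟩
  have hmain : {x : V | x ∈ dualSet Q L ∧ (∃ r : ℕ, ((p : ℤ) ^ r) • x ∈ L) ∧
      ∃ n : ℤ, Q x = (n : ℚ)} = (L : Set V) := by
    refine Set.Subset.antisymm ?_ hLsub
    rintro x ⟨⟨hxspan, hxdual⟩, ⟨r, hr⟩, n, hn⟩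
    set L' : Submodule ℤ V := L ⊔ Submodule.span ℤ {x} with hL'
    have hmem : ∀ y ∈ L', ∃ ℓ ∈ L, ∃ c : ℤ, y = ℓ + c • x := by
      intro y hy
      rw [hL', Submodule.mem_sup] at hy
      obtain ⟨ℓ, hℓ, z, hz, hsum⟩ := hy
      obtain ⟨c, hc⟩ := Submodule.mem_span_singleton.mp hz
      exact ⟨ℓ, hℓ, c, by rw [← hsum, ← hc]⟩
    have hQy : ∀ ℓ ∈ L, ∀ c : ℤ, ∃ m : ℤ, Q (ℓ + c • x) = (m : ℚ) := by
      intro ℓ hℓ c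
      obtain ⟨a, ha⟩ := hmax.1 ℓ hℓ
      obtain ⟨b, hb⟩ := hxdual ℓ hℓ
      refine ⟨a + c * c * n + c * b, ?_⟩
      have h1 : Q (ℓ + c • x) = Q ℓ + Q (c • x) + QuadraticMap.polar Q ℓ (c • x) := by
        simp [QuadraticMap.polar]
      have h2 : Q (c • x) = (c : ℚ) * (c : ℚ) * Q x := by
        rw [← Int.cast_smul_eq_zsmul ℚ, QuadraticMap.map_smul, smul_eq_mul]
      have h3 : QuadraticMap.polar Q ℓ (c • x) = (c : ℚ) * bf Q x ℓ := by
        rw [← Int.cast_smul_eq_zsmul ℚ, QuadraticMap.polar_smul_right, smul_eq_mul]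
        simp only [QuadraticMap.polar, bf]
        rw [add_comm x ℓ]
        ring
      rw [h1, h2, h3, ha, hb, hn]
      push_cast
      ring
    have hL'eq : L' = L := by
      refine hmax.2 L' ?_ ?_ le_sup_left ?_
      · exact Submodule.FG.sup hL.1 (Submodule.fg_span_singleton x)
      · intro y hy
        obtain ⟨ℓ, hℓ, c, rfl⟩ := hmem y hy
        exact hQy ℓ hℓ c
      · intro y hy
        obtain ⟨ℓ, hℓ, c, rfl⟩ := hmem y hy
        refine ⟨r, ?_⟩
        rw [smul_add]
        refine L.add_mem (L.smul_mem _ hℓ) ?_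
        rw [smul_comm]
        exact L.smul_mem c hr
    have : x ∈ L' := (le_sup_right : Submodule.span ℤ {x} ≤ L') (Submodule.mem_span_singleton_self x)
    rwa [hL'eq] at this
  refine ⟨hmain, fun n => ?_⟩
  ext x
  constructor
  · rintro ⟨h1, h2, h3⟩
    have : x ∈ (L : Set V) := hmain ▸ ⟨h1, h2, n, h3⟩
    exact ⟨this, h3⟩
  · rintro ⟨h1, h2⟩
    obtain ⟨hd, hp', -⟩ := hLsub h1
    exact ⟨hd, hp', h2⟩

end BN
end
end

section
/- Let N be squarefree, let k and ℓ be even nonnegative integers, let f ∈ M_k(N)_* and let g ∈ M_ℓ(1) be a modular form of level one. Then the pointwise product g·f belongs to M_{k+ℓ}(N)_*. Hence M(N)_* = ⊕_k M_k(N)_* is a module over the ring of modular forms of level one. -/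
noncomputable section

open Complex UpperHalfPlane Matrix Finset Filter CongruenceSubgroup
open scoped MatrixGroups ModularForm Real

namespace BN

/-! ### Lattices in rational quadratic spaces -/

variable {V : Type} [AddCommGroup V] [Module ℚ V]

/-! ### Auxiliary lemmas for Statement 19 -/

lemma denom_ne_zero' (γ : Matrix (Fin 2) (Fin 2) ℝ) (h : 0 < γ.det) (τ : ℍ) :
    ((γ 1 0 : ℝ) : ℂ) * (τ : ℂ) + ((γ 1 1 : ℝ) : ℂ) ≠ 0 := by
  set c := γ 1 0
  set d := γ 1 1
  have hdet : 0 < γ 0 0 * d - γ 0 1 * c := by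
    have := Matrix.det_fin_two γ
    rw [this] at h
    exact h
  have him : 0 < (τ : ℂ).im := τ.2
  intro h0
  have h2 : ((c : ℂ) * (τ : ℂ) + (d : ℂ)).re = 0 := by rw [h0]; simp
  have h1 : ((c : ℂ) * (τ : ℂ) + (d : ℂ)).im = 0 := by rw [h0]; simp
  simp [Complex.add_im, Complex.mul_im] at h1
  rcases h1 with hc | htau
  · have hd0 : d = 0 := by
      have hre : ((c : ℂ) * (τ : ℂ) + (d : ℂ)).re = c * (τ : ℂ).re + d := by
        simp [Complex.add_re, Complex.mul_re]
      rw [hre, hc] at h2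
      linarith
    rw [hc, hd0] at hdet
    nlinarith
  · have htau' : (τ : ℂ).im = 0 := by simpa [UpperHalfPlane.coe_im] using htau
    linarith

lemma pslash_mul (k l : ℤ) (γ : Matrix (Fin 2) (Fin 2) ℝ) (F G : ℍ → ℂ) (τ : ℍ) :
    pslash (k + l) γ (fun σ => F σ * G σ) τ = pslash k γ F τ * pslash l γ G τ := by
  simp only [pslash]
  by_cases h : 0 < γ.det
  · rw [dif_pos h, dif_pos h, dif_pos h]
    have hd : ((γ 1 0 : ℝ) : ℂ) * (τ : ℂ) + ((γ 1 1 : ℝ) : ℂ) ≠ 0 := denom_ne_zero' γ h τ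
    have h1 : γ.det ^ (((k + l : ℤ) : ℝ) / 2) = γ.det ^ ((k : ℝ) / 2) * γ.det ^ ((l : ℝ) / 2) := by
      rw [← Real.rpow_add h]
      congr 1
      push_cast
      ring
    have h2 : (((γ 1 0 : ℝ) : ℂ) * (τ : ℂ) + ((γ 1 1 : ℝ) : ℂ)) ^ (-(k + l)) =
        (((γ 1 0 : ℝ) : ℂ) * (τ : ℂ) + ((γ 1 1 : ℝ) : ℂ)) ^ (-k) *
          (((γ 1 0 : ℝ) : ℂ) * (τ : ℂ) + ((γ 1 1 : ℝ) : ℂ)) ^ (-l) := by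
      rw [← zpow_add₀ hd]
      congr 1
      ring
    rw [h1, h2]
    push_cast
    ring
  · rw [dif_neg h, dif_neg h, dif_neg h]
    simp

lemma level_one_eval (l : ℤ) (g : ModularForm (Gamma0 1) l)
    (A : Matrix.SpecialLinearGroup (Fin 2) ℤ) (τ z : ℍ)
    (hz : (z : ℂ) = (((A 0 0 : ℤ) : ℂ) * (τ : ℂ) + ((A 0 1 : ℤ) : ℂ)) /
        (((A 1 0 : ℤ) : ℂ) * (τ : ℂ) + ((A 1 1 : ℤ) : ℂ))) :
    g z = (((A 1 0 : ℤ) : ℂ) * (τ : ℂ) + ((A 1 1 : ℤ) : ℂ)) ^ l * g τ := by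
  have hA : A ∈ Gamma0 1 := by
    rw [Gamma0_mem]
    exact Subsingleton.elim _ _
  have hzA : z = A • τ := by
    ext
    rw [hz, UpperHalfPlane.specialLinearGroup_apply]
    push_cast
    rfl
  rw [hzA]
  have := SlashInvariantForm.slash_action_eqn' g (Subgroup.mem_map_of_mem _ hA) τ
  convert this using 2 <;> simp <;> rfl

lemma level_one_translate (l : ℤ) (g : ModularForm (Gamma0 1) l) (τ z : ℍ) (j : ℤ)
    (hz : (z : ℂ) = (τ : ℂ) + (j : ℤ)) : g z = g τ := by
  have := level_one_eval l g (ModularGroup.T ^ j) τ z ?_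
  · rw [this]
    simp [ModularGroup.coe_T_zpow]
  · rw [hz]
    simp [ModularGroup.coe_T_zpow]

lemma matR_eq (ω : Matrix.SpecialLinearGroup (Fin 2) ℤ) :
    matR ω = !![((ω 0 0 : ℤ) : ℝ), ((ω 0 1 : ℤ) : ℝ); ((ω 1 0 : ℤ) : ℝ), ((ω 1 1 : ℤ) : ℝ)] := by
  ext i j
  fin_cases i <;> fin_cases j <;> simp [matR]

lemma det_coe_int (ω : Matrix.SpecialLinearGroup (Fin 2) ℤ) :
    (ω 0 0 : ℤ) * ω 1 1 - ω 0 1 * ω 1 0 = 1 := by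
  have h := ω.2
  rwa [Matrix.det_fin_two] at h

lemma Wmat_eq (ω : Matrix.SpecialLinearGroup (Fin 2) ℤ) (p : ℕ) :
    Wmat ω p = !![((ω 0 0 : ℤ) : ℝ) * p, ((ω 0 1 : ℤ) : ℝ);
      ((ω 1 0 : ℤ) : ℝ) * p, ((ω 1 1 : ℤ) : ℝ)] := by
  rw [Wmat, matR_eq, Matrix.mul_fin_two]
  norm_num

lemma Wmat_det (ω : Matrix.SpecialLinearGroup (Fin 2) ℤ) (p : ℕ) :
    (Wmat ω p).det = p := by
  rw [Wmat_eq, Matrix.det_fin_two_of]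
  have h1 : ((ω 0 0 : ℤ) : ℝ) * ((ω 1 1 : ℤ) : ℝ) - ((ω 0 1 : ℤ) : ℝ) * ((ω 1 0 : ℤ) : ℝ) = 1 := by
    exact_mod_cast congrArg (Int.cast : ℤ → ℝ) (det_coe_int ω)
  nlinarith [h1]

lemma matR_det_pos (ω : Matrix.SpecialLinearGroup (Fin 2) ℤ) : 0 < (matR ω).det := by
  rw [matR_eq, Matrix.det_fin_two_of]
  have h1 : ((ω 0 0 : ℤ) : ℝ) * ((ω 1 1 : ℤ) : ℝ) - ((ω 0 1 : ℤ) : ℝ) * ((ω 1 0 : ℤ) : ℝ) = 1 := by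
    exact_mod_cast congrArg (Int.cast : ℤ → ℝ) (det_coe_int ω)
  nlinarith [h1]

lemma pslash_W_levelone (p : ℕ) (hp0 : 0 < p) (l : ℕ) (g : ModularForm (Gamma0 1) (l : ℤ))
    (ω : Matrix.SpecialLinearGroup (Fin 2) ℤ) (τ : ℍ) (j : ℕ) (z : ℍ)
    (hz : (z : ℂ) = ((τ : ℂ) + (j : ℕ)) / (p : ℕ)) :
    pslash (l : ℤ) (Wmat ω p) (⇑g) z =
      (((p : ℝ) ^ (((l : ℤ) : ℝ) / 2) : ℝ) : ℂ) * g τ := by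
  have hpR : (0 : ℝ) < p := by exact_mod_cast hp0
  have hpC : ((p : ℕ) : ℂ) ≠ 0 := by exact_mod_cast hp0.ne'
  have hdet : (Wmat ω p).det = p := Wmat_det ω p
  have hdetpos : 0 < (Wmat ω p).det := by rw [hdet]; exact hpR
  have e00 : (Wmat ω p) 0 0 = ((ω 0 0 : ℤ) : ℝ) * p := by rw [Wmat_eq]; simp
  have e01 : (Wmat ω p) 0 1 = ((ω 0 1 : ℤ) : ℝ) := by rw [Wmat_eq]; simp
  have e10 : (Wmat ω p) 1 0 = ((ω 1 0 : ℤ) : ℝ) * p := by rw [Wmat_eq]; simp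
  have e11 : (Wmat ω p) 1 1 = ((ω 1 1 : ℤ) : ℝ) := by rw [Wmat_eq]; simp
  set τ' : ℍ := ⟨(τ : ℂ) + (j : ℕ), by simpa using τ.2⟩ with hτ'
  have hτ'c : (τ' : ℂ) = (τ : ℂ) + (j : ℕ) := rfl
  have hgτ' : g τ' = g τ := by
    refine level_one_translate (l : ℤ) g τ τ' (j : ℤ) ?_
    rw [hτ'c]
    push_cast
    ring
  set D : ℂ := ((ω 1 0 : ℤ) : ℂ) * ((τ : ℂ) + (j : ℕ)) + ((ω 1 1 : ℤ) : ℂ) with hD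
  have hDz : (((Wmat ω p) 1 0 : ℝ) : ℂ) * (z : ℂ) + (((Wmat ω p) 1 1 : ℝ) : ℂ) = D := by
    rw [e10, e11, hz, hD]
    push_cast
    field_simp
  have hD0 : D ≠ 0 := by
    have hne := denom_ne_zero' (matR ω) (matR_det_pos ω) τ'
    rw [matR_eq] at hne
    simp only [Matrix.of_apply, Matrix.cons_val', Matrix.cons_val_zero, Matrix.cons_val_one,
      Matrix.head_cons, Matrix.head_fin_const, Matrix.empty_val'] at hne
    rw [hD]
    intro h0
    apply hne
    rw [hτ'c]
    push_cast
    push_cast at h0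
    linear_combination h0
  have hznum : (((Wmat ω p) 0 0 : ℝ) : ℂ) * (z : ℂ) + (((Wmat ω p) 0 1 : ℝ) : ℂ) =
      ((ω 0 0 : ℤ) : ℂ) * ((τ : ℂ) + (j : ℕ)) + ((ω 0 1 : ℤ) : ℂ) := by
    rw [e00, e01, hz]
    push_cast
    field_simp
  simp only [pslash, dif_pos hdetpos]
  have hgz : g (⟨_, moeb_im_pos (Wmat ω p) hdetpos z⟩ : ℍ) = D ^ (l : ℤ) * g τ' := by
    rw [hD]
    refine level_one_eval (l : ℤ) g ω τ' _ ?_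
    show ((((Wmat ω p) 0 0 : ℝ) : ℂ) * (z : ℂ) + (((Wmat ω p) 0 1 : ℝ) : ℂ)) /
        ((((Wmat ω p) 1 0 : ℝ) : ℂ) * (z : ℂ) + (((Wmat ω p) 1 1 : ℝ) : ℂ)) = _
    rw [hznum, hDz, hτ'c, hD]
  rw [hgz, hgτ', hDz, hdet]
  have hDl : D ^ (-(l : ℤ)) * D ^ (l : ℤ) = 1 := by
    rw [← zpow_add₀ hD0]
    simp
  push_cast
  linear_combination (((p : ℝ) ^ (((l : ℤ) : ℝ) / 2) : ℝ) : ℂ) * g τ * hDl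

lemma Uop_apply (p : ℕ) (hp0 : 0 < p) (F : ℍ → ℂ) (τ : ℍ) :
    Uop p F τ = (p : ℂ)⁻¹ * ∑ j ∈ Finset.range p,
      F ⟨((τ : ℂ) + (j : ℕ)) / (p : ℕ), by
        rw [Complex.div_natCast_im]
        have him : (((τ : ℂ) + (j : ℕ)).im) = (τ : ℂ).im := by simp
        rw [him]
        exact div_pos τ.2 (by exact_mod_cast hp0)⟩ := by
  simp only [Uop, dif_pos hp0]

lemma Ck_split (p : ℕ) (hp0 : 0 < p) (k l : ℕ) :
    Ck p ((k : ℤ) + (l : ℤ)) * (((p : ℝ) ^ (((l : ℤ) : ℝ) / 2) : ℝ) : ℂ) = Ck p (k : ℤ) := by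
  have hpR : (0 : ℝ) < p := by exact_mod_cast hp0
  simp only [Ck]
  rw [← Complex.ofReal_mul, ← Real.rpow_add hpR]
  have he : (1 : ℝ) - (((k : ℤ) + (l : ℤ) : ℤ) : ℝ) / 2 + ((l : ℤ) : ℝ) / 2
      = 1 - ((k : ℤ) : ℝ) / 2 := by
    push_cast
    ring
  rw [he]

lemma Uop_congr_mul (p : ℕ) (hp0 : 0 < p) (F G : ℍ → ℂ) (c : ℂ) (τ : ℍ)
    (h : ∀ j : ℕ, ∀ z : ℍ, (z : ℂ) = ((τ : ℂ) + (j : ℕ)) / (p : ℕ) → G z = F z * c) :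
    Uop p G τ = Uop p F τ * c := by
  simp only [Uop, dif_pos hp0]
  rw [mul_assoc, Finset.sum_mul]
  congr 1
  exact Finset.sum_congr rfl fun j hj => h j _ rfl

/-- Restriction of a level-one modular form to `Γ₀(N)`. -/
def restrictG0 (N : ℕ) {l : ℤ} (g : ModularForm (Gamma0 1) l) : ModularForm (Gamma0 N) l where
  toFun := ⇑g
  slash_action_eq' := fun γ hγ => g.slash_action_eq' γ (by
    obtain ⟨A, -, rfl⟩ := hγ
    refine ⟨A, ?_, rfl⟩
    show A ∈ Gamma0 1
    rw [Gamma0_mem]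
    exact Subsingleton.elim _ _)
  holo' := g.holo'
  bdd_at_cusps' hc := g.bdd_at_cusps' (hc.mono (Subgroup.map_mono (by
    intro A _
    rw [Gamma0_mem]
    exact Subsingleton.elim _ _)))

/-- multiplying an element of `M_k(N)_*` by a level-one modular form of
weight `ℓ` lands in `M_{k+ℓ}(N)_*`, so `M(N)_*` is a module over the ring of level-one
modular forms. -/
theorem Mlow_module_over_level_one
    (N : ℕ) (hNsf : Squarefree N) (hN0 : 0 < N)
    (k l : ℕ) (hk : Even k) (hl : Even l)
    (f : ModularForm (Gamma0 N) (k : ℤ)) (hf : MemMlow N (k : ℤ) ⇑f)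
    (g : ModularForm (Gamma0 1) (l : ℤ)) :
    ∃ h : ModularForm (Gamma0 N) ((k : ℤ) + (l : ℤ)),
      (∀ τ : ℍ, h τ = g τ * f τ) ∧ MemMlow N ((k : ℤ) + (l : ℤ)) ⇑h := by
  refine ⟨f.mul (restrictG0 N g), fun τ => mul_comm _ _, ?_⟩
  intro p hp hpN ω hω τ
  have hp0 : 0 < p := hp.pos
  have hcoe : ⇑(f.mul (restrictG0 N g)) = fun σ => f σ * g σ := rfl
  have E := hf p hp hpN ω hω τ
  have key : Uop p (pslash ((k : ℤ) + (l : ℤ)) (Wmat ω p) ⇑(f.mul (restrictG0 N g))) τ =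
      Uop p (pslash (k : ℤ) (Wmat ω p) ⇑f) τ *
        ((((p : ℝ) ^ (((l : ℤ) : ℝ) / 2) : ℝ) : ℂ) * g τ) := by
    refine Uop_congr_mul p hp0 _ _ _ τ fun j z hz => ?_
    rw [hcoe, pslash_mul (k : ℤ) (l : ℤ) (Wmat ω p) (⇑f) (⇑g) z,
      pslash_W_levelone p hp0 l g ω τ j z hz]
  rw [key]
  have hCk := Ck_split p hp0 k l
  have hval : (f.mul (restrictG0 N g)) τ = f τ * g τ := rfl
  rw [hval]
  linear_combination g τ * E + Uop p (pslash (k : ℤ) (Wmat ω p) (⇑f)) τ * g τ * hCk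

end BN
end
end
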